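/- Define λ(p,q) = q·(−1/24 − (p²+1)/(24q²)) + p/8 + p·s(p,q)/2 for coprime positive integers p, q. Then for any natural number r ≥ 1, λ(r²+1, r) = 0. -/

import Mathlib

/-- The sawtooth function `((x))`: zero on integers, else `x - ⌊x⌋ - 1/2`. -/
def saw (x : ℚ) : ℚ := if x = ⌊x⌋ then 0 else x - ⌊x⌋ - 1/2

/-- The Dedekind sum `s(p,q) = ∑_{i=1}^{|q|} ((i/q)) ((p i/q))`. -/
noncomputable def dedekindSum (p q : ℤ) : ℚ :=
  ∑ i ∈ Finset.Icc (1 : ℤ) |q|, saw ((i : ℚ) / (q : ℚ)) * saw ((p : ℚ) * (i : ℚ) / (q : ℚ))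

/-- Lescop's formula for the lens space `L(p,q)`. -/
noncomputable def lescopLens (p q : ℤ) : ℚ :=
  (q : ℚ) * (-1/24 - ((p : ℚ) ^ 2 + 1) / (24 * (q : ℚ) ^ 2)) + (p : ℚ) / 8 +
    (p : ℚ) * dedekindSum p q / 2

lemma saw_add_int (x : ℚ) (n : ℤ) : saw (x + n) = saw x := by
  unfold saw
  rw [Int.floor_add_intCast]
  push_cast
  split_ifs with h1 h2 h2
  · rfl
  · exact absurd (by linarith) h2
  · exact absurd (by linarith) h1
  · ring

lemma saw_one : saw 1 = 0 := by
  unfold saw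
  norm_num

lemma sum_range_cast (n : ℕ) :
    ∑ j ∈ Finset.range n, ((j : ℚ)) = n * (n - 1) / 2 := by
  induction n with
  | zero => simp
  | succ m ih =>
    rw [Finset.sum_range_succ, ih]
    push_cast
    ring

lemma sum_range_sq_cast (n : ℕ) :
    ∑ j ∈ Finset.range n, ((j : ℚ)) ^ 2 = n * (n - 1) * (2 * n - 1) / 6 := by
  induction n with
  | zero => simp
  | succ m ih =>
    rw [Finset.sum_range_succ, ih]
    push_cast
    ring

theorem lescop_lens_r (r : ℕ) (hr : 1 ≤ r) :
    lescopLens ((r : ℤ) ^ 2 + 1) (r : ℤ) = 0 := by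
  have hr0 : (0 : ℤ) < (r : ℤ) := by exact_mod_cast hr
  have hrQ : (r : ℚ) ≠ 0 := by positivity
  have hded : dedekindSum ((r : ℤ) ^ 2 + 1) (r : ℤ)
      = ((r : ℚ) - 1) * ((r : ℚ) - 2) / (12 * (r : ℚ)) := by
    unfold dedekindSum
    rw [abs_of_pos hr0]
    simp only [Int.cast_natCast, Int.cast_add, Int.cast_one, Int.cast_pow]
    have step1 : ∀ i ∈ Finset.Icc (1 : ℤ) (r : ℤ),
        saw ((i : ℚ) / (r : ℚ)) * saw (((r : ℚ) ^ 2 + 1) * (i : ℚ) / (r : ℚ))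
          = saw ((i : ℚ) / (r : ℚ)) ^ 2 := by
      intro i _
      have key : ((r : ℚ) ^ 2 + 1) * (i : ℚ) / (r : ℚ)
          = (i : ℚ) / (r : ℚ) + (((r : ℤ) * i : ℤ) : ℚ) := by
        push_cast
        field_simp
        ring
      rw [key, saw_add_int]
      ring
    rw [Finset.sum_congr rfl step1]
    have hins : Finset.Icc (1 : ℤ) (r : ℤ) = insert (r : ℤ) (Finset.Ico (1 : ℤ) (r : ℤ)) :=
      (Finset.Ico_insert_right (by exact_mod_cast hr)).symm
    rw [hins, Finset.sum_insert (by simp)]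
    have htop : saw (((r : ℤ) : ℚ) / (r : ℚ)) ^ 2 = 0 := by
      have : ((r : ℤ) : ℚ) / (r : ℚ) = 1 := by
        push_cast
        field_simp
      rw [this, saw_one]
      norm_num
    rw [htop, zero_add]
    have step2 : ∀ i ∈ Finset.Ico (1 : ℤ) (r : ℤ),
        saw ((i : ℚ) / (r : ℚ)) ^ 2 = ((i : ℚ) / (r : ℚ) - 1 / 2) ^ 2 := by
      intro i hi
      rw [Finset.mem_Ico] at hi
      have h1 : (0 : ℚ) < (i : ℚ) / (r : ℚ) := by
        apply div_pos
        · exact_mod_cast lt_of_lt_of_le one_pos hi.1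
        · exact_mod_cast hr0
      have h2 : (i : ℚ) / (r : ℚ) < 1 := by
        rw [div_lt_one (by exact_mod_cast hr0)]
        exact_mod_cast hi.2
      have hfl : ⌊(i : ℚ) / (r : ℚ)⌋ = 0 := by
        apply Int.floor_eq_zero_iff.mpr
        constructor
        · exact le_of_lt h1
        · exact h2
      unfold saw
      rw [hfl]
      rw [if_neg (by push_cast; linarith)]
      push_cast
      ring
    rw [Finset.sum_congr rfl step2]
    rw [Int.Ico_eq_finset_map, Finset.sum_map]
    have hto : ((r : ℤ) - 1).toNat = r - 1 := by omega
    rw [hto]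
    simp only [Function.Embedding.trans_apply, Nat.castEmbedding_apply,
      addLeftEmbedding_apply]
    push_cast
    have expand : ∀ j ∈ Finset.range (r - 1),
        (((1 : ℚ) + (j : ℚ)) / (r : ℚ) - 1 / 2) ^ 2
          = ((j : ℚ) ^ 2) / (r : ℚ) ^ 2 + (j : ℚ) * (2 / (r : ℚ) ^ 2 - 1 / (r : ℚ))
            + (1 / (r : ℚ) ^ 2 - 1 / (r : ℚ) + 1 / 4) := by
      intro j _
      field_simp
      ring
    rw [Finset.sum_congr rfl expand]
    rw [Finset.sum_add_distrib, Finset.sum_add_distrib, ← Finset.sum_div,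
      ← Finset.sum_mul, sum_range_cast, sum_range_sq_cast, Finset.sum_const,
      Finset.card_range]
    have hm : ((r - 1 : ℕ) : ℚ) = (r : ℚ) - 1 := by
      have : (1 : ℕ) ≤ r := hr
      push_cast [this]
      ring
    simp only [nsmul_eq_mul]
    rw [hm]
    field_simp
    ring
  unfold lescopLens
  rw [hded]
  push_cast
  field_simp
  ring
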